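/- arXiv:1304.6246 — 2 statements merged into one kernel-verified Lean document; each statement's English description precedes it below -/
import Mathlib

section
/- Let G be a topological group, g ∈ G, and t ∈ G such that for every k ≥ 0 the element t⁻¹ (g u)ᵏ t g⁻ᵏ lies in a fixed compact open subgroup U of G having a base of identity neighbourhoods consisting of subgroups normal in U. Then t·con(g)·t⁻¹ ⊆ con(gu). -/
open Filter Topology

def conSet {G : Type*} [Group G] [TopologicalSpace G] (g : G) : Set G :=
  {u : G | Filter.Tendsto (fun n : ℕ => g ^ n * u * (g ^ n)⁻¹) Filter.atTop (nhds 1)}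

def titsCore (G : Type*) [Group G] [TopologicalSpace G] : Subgroup G :=
  Subgroup.closure (⋃ g : G, _root_.closure (conSet g))

theorem stmt11 {G : Type*} [Group G] [TopologicalSpace G] [IsTopologicalGroup G]
    [T2Space G] [LocallyCompactSpace G] [TotallyDisconnectedSpace G]
    (g u t : G)
    (U : Subgroup G) (hUc : IsCompact (U : Set G)) (hUo : IsOpen (U : Set G))
    (hbase : ∀ W ∈ 𝓝 (1 : G), ∃ V : Subgroup G, IsOpen (V : Set G) ∧
      (V : Set G) ⊆ W ∧ V ≤ U ∧ ∀ x ∈ U, ∀ w ∈ V, x * w * x⁻¹ ∈ V)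
    (ht : ∀ k : ℕ, t⁻¹ * (g * u) ^ k * t * (g ^ k)⁻¹ ∈ U) :
    (fun x => t * x * t⁻¹) '' conSet g ⊆ conSet (g * u) := by
  rintro _ ⟨x, hx, rfl⟩
  rw [conSet, Set.mem_setOf_eq, Filter.tendsto_def]
  intro W hW
  have hcont : Continuous fun y : G => t * y * t⁻¹ :=
    (continuous_const.mul continuous_id).mul continuous_const
  have hW' : (fun y : G => t * y * t⁻¹) ⁻¹' W ∈ 𝓝 (1 : G) := by
    have h1 : (fun y : G => t * y * t⁻¹) 1 = 1 := by group
    exact hcont.continuousAt (x := (1 : G)) (by simpa using hW)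
  obtain ⟨V, hVo, hVW, hVU, hVnorm⟩ := hbase _ hW'
  have hVn : (V : Set G) ∈ 𝓝 (1 : G) := hVo.mem_nhds V.one_mem
  filter_upwards [hx hVn] with n hn
  have hmem : t * ((t⁻¹ * (g * u) ^ n * t * (g ^ n)⁻¹) * (g ^ n * x * (g ^ n)⁻¹) *
      (t⁻¹ * (g * u) ^ n * t * (g ^ n)⁻¹)⁻¹) * t⁻¹ ∈ W :=
    hVW (hVnorm _ (ht n) _ hn)
  have heq : t * ((t⁻¹ * (g * u) ^ n * t * (g ^ n)⁻¹) * (g ^ n * x * (g ^ n)⁻¹) *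
      (t⁻¹ * (g * u) ^ n * t * (g ^ n)⁻¹)⁻¹) * t⁻¹
      = (g * u) ^ n * (t * x * t⁻¹) * ((g * u) ^ n)⁻¹ := by group
  show (g * u) ^ n * (t * x * t⁻¹) * ((g * u) ^ n)⁻¹ ∈ W
  exact heq ▸ hmem
end

section
/- Let G be a totally disconnected locally compact group, g ∈ G, and suppose the cyclic subgroup ⟨g⟩ generated by g is relatively compact (i.e. has compact closure). Then con(g) is trivial. -/
open Filter Topology

theorem stmt17 {G : Type*} [Group G] [TopologicalSpace G] [IsTopologicalGroup G]
    [T2Space G] [LocallyCompactSpace G] [TotallyDisconnectedSpace G]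
    (g : G) (hg : IsCompact (_root_.closure (Subgroup.zpowers g : Set G))) :
    conSet g = {1} := by
  ext u
  simp only [conSet, Set.mem_setOf_eq, Set.mem_singleton_iff]
  constructor
  · intro hu
    by_contra hne
    obtain ⟨V, hVo, hV1, hVu⟩ : ∃ V : Set G, IsOpen V ∧ (1:G) ∈ V ∧ u ∉ V :=
      ⟨{u}ᶜ, isOpen_compl_singleton, Ne.symm hne, by simp⟩
    have hf : Continuous (fun p : G × G => p.1⁻¹ * p.2 * p.1) := by continuity
    have hsub : _root_.closure (Subgroup.zpowers g : Set G) ×ˢ ({1} : Set G) ⊆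
        (fun p : G × G => p.1⁻¹ * p.2 * p.1) ⁻¹' V := by
      rintro ⟨c, x⟩ ⟨-, hx⟩
      simp only [Set.mem_singleton_iff] at hx
      simp [hx, hV1]
    obtain ⟨U, W, hUo, hWo, hCU, h1W, hUW⟩ :=
      generalized_tube_lemma hg isCompact_singleton (hVo.preimage hf) hsub
    have hW : W ∈ nhds (1:G) := hWo.mem_nhds (h1W rfl)
    obtain ⟨n, hn⟩ := (hu.eventually_mem hW).exists
    have hgn : g ^ n ∈ U := hCU (subset_closure ⟨(n : ℤ), by simp⟩)
    have := hUW (Set.mk_mem_prod hgn hn)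
    simp only [Set.mem_preimage] at this
    apply hVu
    have heq : (g ^ n)⁻¹ * (g ^ n * u * (g ^ n)⁻¹) * g ^ n = u := by group
    rwa [heq] at this
  · rintro rfl
    simp only [mul_one, mul_inv_cancel]
    exact tendsto_const_nhds
end
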